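/- Let I be a monomial ideal of R = K[x_1,…,x_n], let p be a monomial prime ideal of R, let t ≥ 1 be an integer, and let y_1,…,y_s be distinct variables of R such that for each i = 1,…,s there exist an integer α_i ≥ 1 and a monomial ideal J_i of R with y_i ∉ supp(J_i), I^t + (y_i^{α_i}) = J_i + (y_i^{α_i}), and p∖y_i ∉ Ass(R/J_i). If ∏_{i=1}^s y_i^{α_i} ∈ I^ℓ for some integer ℓ ≥ t, then p ∉ Ass(R/I^t). -/

import Mathlib

open MvPolynomial

/-- `I` is an ideal of `K[x_1,…,x_n]` generated by monomials. -/
def IsMonomialIdeal {K : Type*} [Field K] {n : ℕ}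
    (I : Ideal (MvPolynomial (Fin n) K)) : Prop :=
  ∃ S : Set (Fin n →₀ ℕ),
    I = Ideal.span ((fun e => MvPolynomial.monomial e (1 : K)) '' S)

/-- `I` is a monomial ideal admitting a monomial generating set in which no
monomial is divisible by a variable `x_i` with `i ∈ A`; equivalently, `I` is a
monomial ideal whose support is disjoint from `A`. -/
def MonomialIdealAvoiding {K : Type*} [Field K] {n : ℕ} (A : Set (Fin n))
    (I : Ideal (MvPolynomial (Fin n) K)) : Prop :=
  ∃ S : Set (Fin n →₀ ℕ), (∀ e ∈ S, ∀ i ∈ A, e i = 0) ∧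
    I = Ideal.span ((fun e => MvPolynomial.monomial e (1 : K)) '' S)

section Helpers
variable {K : Type*} [Field K] {n : ℕ}

lemma monomial_one_mem_span_iff {S : Set (Fin n →₀ ℕ)} {e : Fin n →₀ ℕ} :
    (monomial e (1 : K)) ∈ Ideal.span ((fun e => monomial e (1 : K)) '' S) ↔
      ∃ a ∈ S, a ≤ e := by
  rw [mem_ideal_span_monomial_image]
  simp [support_monomial]

lemma span_X_image_isPrime (A : Set (Fin n)) :
    (Ideal.span ((X : Fin n → MvPolynomial (Fin n) K) '' A)).IsPrime := by
  classical
  set φ : Fin n → MvPolynomial (Fin n) K := fun i => if i ∈ A then 0 else X i with hφ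
  have haev : ∀ (m : Fin n →₀ ℕ) (c : K),
      aeval φ (monomial m c) = if ∀ i ∈ A, m i = 0 then monomial m c else 0 := by
    intro m c
    rw [aeval_monomial]
    split_ifs with h
    · have : (m.prod fun i e => φ i ^ e) = m.prod fun i e => (X i : MvPolynomial (Fin n) K) ^ e := by
        apply Finsupp.prod_congr
        intro i hi
        have : i ∉ A := fun hiA => (Finsupp.mem_support_iff.mp hi) (h i hiA)
        simp [hφ, this]
      rw [this, monomial_eq, algebraMap_eq]
    · push_neg at h
      obtain ⟨i₀, hi₀A, hi₀⟩ := h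
      have hmem : i₀ ∈ m.support := Finsupp.mem_support_iff.mpr hi₀
      have : (m.prod fun i e => φ i ^ e) = 0 := by
        apply Finset.prod_eq_zero hmem
        simp [hφ, hi₀A, hi₀]
      rw [this, mul_zero]
  have key : Ideal.span ((X : Fin n → MvPolynomial (Fin n) K) '' A) =
      RingHom.ker (aeval φ : MvPolynomial (Fin n) K →ₐ[K] MvPolynomial (Fin n) K) := by
    apply le_antisymm
    · rw [Ideal.span_le]
      rintro _ ⟨i, hi, rfl⟩
      simp [RingHom.mem_ker, hφ, hi]
    · intro f hf
      rw [RingHom.mem_ker] at hf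
      rw [mem_ideal_span_X_image]
      by_contra hcon
      push_neg at hcon
      obtain ⟨m₀, hm₀, hm₀A⟩ := hcon
      have h1 : coeff m₀ (aeval φ f) = coeff m₀ f := by
        conv_lhs => rw [← support_sum_monomial_coeff f]
        rw [map_sum]
        rw [Finset.sum_congr rfl (fun m _ => by rw [haev m (coeff m f)])]
        rw [coeff_sum]
        rw [Finset.sum_eq_single_of_mem m₀ hm₀ ?_]
        · rw [if_pos hm₀A, coeff_monomial, if_pos rfl]
        · intro m hm hne
          split_ifs with h
          · rw [coeff_monomial, if_neg hne]
          · exact coeff_zero _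
      rw [hf] at h1
      simp at h1
      exact (mem_support_iff.mp hm₀) h1.symm
  rw [key]
  exact RingHom.ker_isPrime _

lemma isMonomialIdeal_mul {I J : Ideal (MvPolynomial (Fin n) K)}
    (hI : IsMonomialIdeal I) (hJ : IsMonomialIdeal J) : IsMonomialIdeal (I * J) := by
  obtain ⟨S, rfl⟩ := hI; obtain ⟨S', rfl⟩ := hJ
  refine ⟨Set.image2 (· + ·) S S', ?_⟩
  rw [Ideal.span_mul_span']
  congr 1
  ext f
  simp only [Set.mem_mul, Set.mem_image, Set.mem_image2]
  constructor
  · rintro ⟨-, ⟨a, ha, rfl⟩, -, ⟨b, hb, rfl⟩, rfl⟩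
    exact ⟨a + b, ⟨a, ha, b, hb, rfl⟩, by rw [monomial_mul, one_mul]⟩
  · rintro ⟨-, ⟨a, ha, b, hb, rfl⟩, rfl⟩
    exact ⟨_, ⟨a, ha, rfl⟩, _, ⟨b, hb, rfl⟩, by rw [monomial_mul, one_mul]⟩

lemma isMonomialIdeal_pow {I : Ideal (MvPolynomial (Fin n) K)}
    (hI : IsMonomialIdeal I) (t : ℕ) : IsMonomialIdeal (I ^ t) := by
  induction t with
  | zero =>
    refine ⟨{0}, ?_⟩
    rw [pow_zero, Ideal.one_eq_top]
    rw [Set.image_singleton]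
    rw [show (monomial (0 : Fin n →₀ ℕ) (1 : K)) = 1 from rfl]
    rw [Ideal.span_singleton_one]
  | succ t ih =>
    rw [pow_succ]
    exact isMonomialIdeal_mul ih hI

end Helpers

theorem not_associated_of_prod_mem_pow
    {K : Type*} [Field K] {n s : ℕ}
    (I : Ideal (MvPolynomial (Fin n) K)) (hI : IsMonomialIdeal I)
    (T : Set (Fin n)) (t : ℕ) (ht : 1 ≤ t)
    (y : Fin s → Fin n) (hy : Function.Injective y)
    (α : Fin s → ℕ) (hα : ∀ i, 1 ≤ α i)
    (J : Fin s → Ideal (MvPolynomial (Fin n) K))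
    (hJ : ∀ i, MonomialIdealAvoiding {y i} (J i))
    (hIJ : ∀ i, I ^ t + Ideal.span {(X (y i) : MvPolynomial (Fin n) K) ^ α i}
        = J i + Ideal.span {(X (y i) : MvPolynomial (Fin n) K) ^ α i})
    (hass : ∀ i,
      Ideal.span ((X : Fin n → MvPolynomial (Fin n) K) '' (T \ {y i})) ∉
        associatedPrimes (MvPolynomial (Fin n) K)
          (MvPolynomial (Fin n) K ⧸ J i))
    (ℓ : ℕ) (hℓ : t ≤ ℓ)
    (hprod : (∏ i, (X (y i) : MvPolynomial (Fin n) K) ^ α i) ∈ I ^ ℓ) :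
    Ideal.span ((X : Fin n → MvPolynomial (Fin n) K) '' T) ∉
      associatedPrimes (MvPolynomial (Fin n) K)
        (MvPolynomial (Fin n) K ⧸ I ^ t) := by
  classical
  intro hp
  obtain ⟨hprime, x, hx⟩ := isAssociatedPrime_iff.mp hp
  obtain ⟨f, rfl⟩ := Ideal.Quotient.mk_surjective x
  obtain ⟨St, hSt⟩ := isMonomialIdeal_pow hI t
  set p : Ideal (MvPolynomial (Fin n) K) :=
    Ideal.span ((X : Fin n → MvPolynomial (Fin n) K) '' T) with hpdef
  -- membership criterion for p
  have hmem : ∀ r : MvPolynomial (Fin n) K, r ∈ p ↔ r * f ∈ I ^ t := by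
    intro r
    rw [hx, Submodule.mem_colon_singleton, Submodule.mem_bot]
    have hsm : r • (Ideal.Quotient.mk (I ^ t) f) = Ideal.Quotient.mk (I ^ t) (r * f) := rfl
    rw [hsm, Ideal.Quotient.eq_zero_iff_mem]
  have hone : (1 : MvPolynomial (Fin n) K) ∉ p := (Ideal.ne_top_iff_one p).mp hprime.ne_top
  set MQ : (Fin n →₀ ℕ) → Prop := fun e => ∃ a ∈ St, a ≤ e with hMQdef
  have hMQ : ∀ e : Fin n →₀ ℕ, (monomial e (1 : K) ∈ I ^ t) ↔ MQ e := by
    intro e; rw [hSt, monomial_one_mem_span_iff]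
  have hMQmono : ∀ {e e' : Fin n →₀ ℕ}, MQ e → e ≤ e' → MQ e' := by
    rintro e e' ⟨a, ha, hle⟩ h
    exact ⟨a, ha, le_trans hle h⟩
  -- Step A : a monomial witness
  have hstepA : ∃ v ∈ f.support, ¬ MQ v ∧
      ∀ e : Fin n →₀ ℕ, MQ (e + v) → monomial e (1 : K) ∈ p := by
    by_contra hcon
    push_neg at hcon
    have hchoice : ∀ v : Fin n →₀ ℕ,
        ∃ e, (v ∈ f.support → MQ (e + v)) ∧ monomial e (1 : K) ∉ p := by
      intro v
      by_cases hv : v ∈ f.support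
      · by_cases hMv : MQ v
        · exact ⟨0, fun _ => by rwa [zero_add], by rw [monomial_zero', C_1]; exact hone⟩
        · obtain ⟨e, he1, he2⟩ := hcon v hv hMv
          exact ⟨e, fun _ => he1, he2⟩
      · exact ⟨0, fun h => absurd h hv, by rw [monomial_zero', C_1]; exact hone⟩
    choose c hc1 hc2 using hchoice
    set Cc : Fin n →₀ ℕ := ∑ m ∈ f.support, c m with hCc
    have hCle : ∀ m ∈ f.support, c m ≤ Cc :=
      fun m hm => Finset.single_le_sum (fun i _ => zero_le) hm
    have hgnotp : monomial Cc (1 : K) ∉ p := by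
      rw [hCc, monomial_sum_one]
      intro hmem'
      haveI := hprime
      rw [Ideal.IsPrime.prod_mem_iff] at hmem'
      obtain ⟨m, hm, hmp⟩ := hmem'
      exact hc2 m hmp
    have hgf : monomial Cc (1 : K) * f ∈ I ^ t := by
      rw [hSt, mem_ideal_span_monomial_image]
      intro m' hm'
      have hsub := support_mul (monomial Cc (1 : K)) f hm'
      rw [Finset.mem_add] at hsub
      obtain ⟨a, ha, b, hb, rfl⟩ := hsub
      rw [support_monomial, if_neg one_ne_zero, Finset.mem_singleton] at ha
      subst ha
      obtain ⟨a', ha', hle'⟩ := hc1 b hb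
      exact ⟨a', ha', le_trans hle' (add_le_add (hCle b hb) le_rfl)⟩
    exact hgnotp ((hmem _).mpr hgf)
  obtain ⟨v, hvsupp, hv1, hv2⟩ := hstepA
  have hv3 : ∀ k ∈ T, MQ (Finsupp.single k 1 + v) := by
    intro k hk
    have hXk : (X k : MvPolynomial (Fin n) K) ∈ p := Ideal.subset_span ⟨k, hk, rfl⟩
    have hXf := (hmem _).mp hXk
    rw [hSt, mem_ideal_span_monomial_image] at hXf
    apply hXf
    rw [mem_support_iff]
    have hco : coeff (Finsupp.single k 1 + v) ((X k : MvPolynomial (Fin n) K) * f)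
        = coeff v f := by
      rw [show (X k : MvPolynomial (Fin n) K) = monomial (Finsupp.single k 1) 1 from rfl,
        coeff_monomial_mul, one_mul]
    rw [hco]
    exact mem_support_iff.mp hvsupp
  -- the key claim : α i ≤ v (y i) for each i
  have hαv : ∀ i, α i ≤ v (y i) := by
    intro i
    by_contra hlt
    push_neg at hlt
    obtain ⟨Si, hSiav, hSi⟩ := hJ i
    have hSiy : ∀ a ∈ Si, a (y i) = 0 := fun a ha => hSiav a ha (y i) rfl
    set MJ : (Fin n →₀ ℕ) → Prop := fun e => ∃ a ∈ Si, a ≤ e with hMJdef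
    have hsum : ∀ (S' : Set (Fin n →₀ ℕ)) (Q : Ideal (MvPolynomial (Fin n) K)),
        Q = Ideal.span ((fun e => monomial e (1 : K)) '' S') →
        Q + Ideal.span {(X (y i) : MvPolynomial (Fin n) K) ^ α i}
          = Ideal.span ((fun e => monomial e (1 : K)) ''
              (S' ∪ {Finsupp.single (y i) (α i)})) := by
      intro S' Q hQ
      rw [hQ, Set.image_union, Ideal.span_union, Set.image_singleton, X_pow_eq_monomial,
        Ideal.add_eq_sup]
    have hunion : ∀ (S' : Set (Fin n →₀ ℕ)) (e : Fin n →₀ ℕ),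
        (∃ a ∈ S' ∪ {Finsupp.single (y i) (α i)}, a ≤ e) ↔
          ((∃ a ∈ S', a ≤ e) ∨ α i ≤ e (y i)) := by
      intro S' e
      constructor
      · rintro ⟨a, (ha | ha), hle⟩
        · exact Or.inl ⟨a, ha, hle⟩
        · rw [Set.mem_singleton_iff] at ha
          subst ha
          exact Or.inr (Finsupp.single_le_iff.mp hle)
      · rintro (⟨a, ha, hle⟩ | h)
        · exact ⟨a, Or.inl ha, hle⟩
        · exact ⟨_, Or.inr rfl, Finsupp.single_le_iff.mpr h⟩
    have hiff : ∀ e : Fin n →₀ ℕ,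
        (MQ e ∨ α i ≤ e (y i)) ↔ (MJ e ∨ α i ≤ e (y i)) := by
      intro e
      have hL := hsum St _ hSt
      have hR := hsum Si _ hSi
      have heq := hIJ i
      rw [hL, hR] at heq
      have h1 := monomial_one_mem_span_iff (K := K)
        (S := St ∪ {Finsupp.single (y i) (α i)}) (e := e)
      have h2 := monomial_one_mem_span_iff (K := K)
        (S := Si ∪ {Finsupp.single (y i) (α i)}) (e := e)
      rw [hunion] at h1 h2
      rw [← h1, ← h2, heq]
    have hup : ∀ e : Fin n →₀ ℕ, e (y i) < α i → MQ e → MJ e := by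
      intro e he h
      exact ((hiff e).mp (Or.inl h)).resolve_right (by omega)
    have hdown : ∀ e : Fin n →₀ ℕ, e (y i) < α i → MJ e → MQ e := by
      intro e he h
      exact ((hiff e).mpr (Or.inl h)).resolve_right (by omega)
    set w : Fin n →₀ ℕ := v + Finsupp.single (y i) (α i - 1 - v (y i)) with hwdef
    have hwy : w (y i) = α i - 1 := by
      rw [hwdef, Finsupp.add_apply, Finsupp.single_eq_same]
      omega
    have hwj : ∀ j, j ≠ y i → w j = v j := by
      intro j hj
      rw [hwdef, Finsupp.add_apply, Finsupp.single_eq_of_ne hj, add_zero]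
    have hvw : v ≤ w := by
      rw [Finsupp.le_def]
      intro j
      rw [hwdef, Finsupp.add_apply]
      exact Nat.le_add_right _ _
    refine hass i (isAssociatedPrime_iff.mpr ⟨span_X_image_isPrime _, Ideal.Quotient.mk (J i) (monomial w (1 : K)), ?_⟩)
    ext r
    rw [Submodule.mem_colon_singleton, Submodule.mem_bot]
    have hsm : r • (Ideal.Quotient.mk (J i) (monomial w (1 : K)))
        = Ideal.Quotient.mk (J i) (r * monomial w (1 : K)) := rfl
    rw [hsm, Ideal.Quotient.eq_zero_iff_mem]
    constructor
    · intro hr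
      have hcol : Ideal.span ((X : Fin n → MvPolynomial (Fin n) K) '' (T \ {y i}))
          ≤ (J i).colon (Ideal.span {monomial w (1 : K)}) := by
        rw [Ideal.span_le]
        rintro - ⟨k, hk, rfl⟩
        rw [SetLike.mem_coe, Ideal.mem_colon_span_singleton]
        have hkT : k ∈ T := hk.1
        have hkne : k ≠ y i := hk.2
        have h1 : MQ (Finsupp.single k 1 + v) := hv3 k hkT
        have h2 : (Finsupp.single k (1:ℕ) + v) (y i) < α i := by
          rw [Finsupp.add_apply, Finsupp.single_eq_of_ne (Ne.symm hkne), zero_add]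
          exact hlt
        obtain ⟨a, ha, hale⟩ := hup _ h2 h1
        have hXm : (X k : MvPolynomial (Fin n) K) * monomial w 1
            = monomial (Finsupp.single k 1 + w) 1 := by
          rw [show (X k : MvPolynomial (Fin n) K) = monomial (Finsupp.single k 1) 1 from rfl,
            monomial_mul, one_mul]
        rw [hXm, hSi, monomial_one_mem_span_iff]
        exact ⟨a, ha, le_trans hale (add_le_add le_rfl hvw)⟩
      exact Ideal.mem_colon_span_singleton.mp (hcol hr)
    · intro hr
      rw [mem_ideal_span_X_image]
      intro m hm
      have hmw : m + w ∈ (r * monomial w (1 : K)).support := by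
        rw [mem_support_iff, coeff_mul_monomial, mul_one]
        exact mem_support_iff.mp hm
      rw [hSi, mem_ideal_span_monomial_image] at hr
      obtain ⟨a, ha, hale⟩ := hr (m + w) hmw
      set m' : Fin n →₀ ℕ := m.erase (y i) with hm'def
      have ham : a ≤ m' + v := by
        rw [Finsupp.le_def]
        intro j
        by_cases hj : j = y i
        · subst hj
          rw [hSiy a ha]
          exact Nat.zero_le _
        · have h3 := Finsupp.le_def.mp hale j
          rw [Finsupp.add_apply] at h3
          rw [hwj j hj] at h3
          rw [Finsupp.add_apply, hm'def, Finsupp.erase_ne hj]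
          exact h3
      have hm'y : (m' + v) (y i) < α i := by
        rw [Finsupp.add_apply, hm'def, Finsupp.erase_same, zero_add]
        exact hlt
      have hm'Q : MQ (m' + v) := hdown _ hm'y ⟨a, ha, ham⟩
      have hm'p := hv2 m' hm'Q
      rw [hpdef, mem_ideal_span_X_image] at hm'p
      obtain ⟨k, hkT, hk0⟩ := hm'p m' (by
        rw [support_monomial, if_neg one_ne_zero, Finset.mem_singleton])
      have hkne : k ≠ y i := by
        intro hkeq
        rw [hkeq, hm'def, Finsupp.erase_same] at hk0
        exact hk0 rfl
      refine ⟨k, ⟨hkT, hkne⟩, ?_⟩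
      rwa [hm'def, Finsupp.erase_ne hkne] at hk0
  -- conclusion
  set e0 : Fin n →₀ ℕ := ∑ i, Finsupp.single (y i) (α i) with he0
  have hprodmon : (∏ i, (X (y i) : MvPolynomial (Fin n) K) ^ α i) = monomial e0 (1 : K) := by
    rw [he0, monomial_sum_one]
    exact Finset.prod_congr rfl fun i _ => X_pow_eq_monomial
  have he0Q : MQ e0 := by
    have h1 : monomial e0 (1 : K) ∈ I ^ t :=
      Ideal.pow_le_pow_right hℓ (hprodmon ▸ hprod)
    rwa [hSt, monomial_one_mem_span_iff] at h1
  have he0v : e0 ≤ v := by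
    rw [Finsupp.le_def]
    intro j
    rw [he0, Finsupp.finset_sum_apply]
    by_cases hj : ∃ i0, y i0 = j
    · obtain ⟨i0, rfl⟩ := hj
      rw [Finset.sum_eq_single i0]
      · rw [Finsupp.single_eq_same]; exact hαv i0
      · intro i _ hne
        exact Finsupp.single_eq_of_ne (fun h => hne (hy h).symm)
      · intro h; exact absurd (Finset.mem_univ i0) h
    · push_neg at hj
      rw [Finset.sum_eq_zero fun i _ => Finsupp.single_eq_of_ne (hj i).symm]
      exact Nat.zero_le _
  exact hv1 (hMQmono he0Q he0v)
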